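/- Let f : ℝ^n → ℝ ∪ {+∞} be a proper, lower semicontinuous, coercive function that is uniformly quasiconvex with modulus φ on a closed convex set C ⊆ dom f. Then f attains its minimum on C at a unique point x̄ (i.e., argmin_{x∈C} f(x) = {x̄}), and f(x̄) + (1/4)·φ(‖y − x̄‖) ≤ f(y) holds for all y ∈ C. -/

import Mathlib

noncomputable section

open Set Filter

/-- `φ : [0,∞) → [0,∞]` is a modulus: increasing and vanishing only at `0`. -/
def IsModulus (φ : ℝ → EReal) : Prop :=
  (∀ ⦃s t : ℝ⦄, 0 ≤ s → s ≤ t → φ s ≤ φ t) ∧ φ 0 = 0 ∧ (∀ t : ℝ, 0 < t → 0 < φ t)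

/-- `f` is uniformly quasiconvex on `C` with modulus `φ`. -/
def UnifQuasiconvexOn {E : Type*} [NormedAddCommGroup E] [NormedSpace ℝ E]
    (C : Set E) (φ : ℝ → EReal) (f : E → EReal) : Prop :=
  ∀ ⦃x⦄, x ∈ C → ∀ ⦃y⦄, y ∈ C → ∀ ⦃l : ℝ⦄, l ∈ Set.Icc (0 : ℝ) 1 →
    f (l • x + (1 - l) • y) + ((l * (1 - l) : ℝ) : EReal) * φ ‖x - y‖ ≤ max (f x) (f y)

/-- `f(x) → +∞` as `‖x‖ → +∞`. -/
def Coercive {E : Type*} [NormedAddCommGroup E] (f : E → EReal) : Prop :=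
  ∀ M : ℝ, ∃ R : ℝ, ∀ x : E, R ≤ ‖x‖ → (M : EReal) < f x

/-- A lower semicontinuous `EReal`-valued function attains its minimum on a nonempty
compact set. -/
lemma lsc_exists_min_on_compact {E : Type*} [TopologicalSpace E] {K : Set E}
    (hK : IsCompact K) (hne : K.Nonempty) {f : E → EReal}
    (hlsc : LowerSemicontinuous f) : ∃ x ∈ K, ∀ y ∈ K, f x ≤ f y := by
  obtain ⟨x, hxK, hx⟩ : (K ∩ ⋂ z : K, f ⁻¹' Set.Iic (f z)).Nonempty := by
    apply hK.inter_iInter_nonempty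
    · exact fun z => hlsc.isClosed_preimage _
    · intro u
      rcases u.eq_empty_or_nonempty with rfl | hu
      · simpa using hne
      · obtain ⟨i, hi, hmin⟩ := u.exists_min_image (fun z => f z) hu
        exact ⟨i, i.2, Set.mem_iInter₂.2 fun j hj => hmin j hj⟩
  exact ⟨x, hxK, fun y hy => Set.mem_iInter.1 hx ⟨y, hy⟩⟩

/-- A proper, lsc, coercive function that is uniformly quasiconvex with
modulus `φ` on a nonempty closed convex set `C ⊆ dom f` attains its minimum on `C` at a
unique point `x̄`, and `f(x̄) + (1/4)·φ(‖y − x̄‖) ≤ f(y)` for all `y ∈ C`. -/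
theorem statement_8 (n : ℕ) (f : EuclideanSpace ℝ (Fin n) → EReal)
    (hproper : ∃ x, f x ≠ ⊤) (hbot : ∀ x, f x ≠ ⊥)
    (hlsc : LowerSemicontinuous f) (hcoer : Coercive f)
    (C : Set (EuclideanSpace ℝ (Fin n))) (hCne : C.Nonempty)
    (hCclosed : IsClosed C) (hCconv : Convex ℝ C)
    (hdom : ∀ x ∈ C, f x ≠ ⊤)
    (φ : ℝ → EReal) (hφ : IsModulus φ)
    (hquasi : UnifQuasiconvexOn C φ f) :
    ∃ xb ∈ C, (∀ y ∈ C, f xb ≤ f y) ∧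
      (∀ z ∈ C, (∀ y ∈ C, f z ≤ f y) → z = xb) ∧
      (∀ y ∈ C, f xb + (((1 : ℝ) / 4 : ℝ) : EReal) * φ ‖y - xb‖ ≤ f y) := by
  obtain ⟨x0, hx0⟩ := hCne
  set M : ℝ := (f x0).toReal with hM
  have hfx0 : f x0 = (M : EReal) := (EReal.coe_toReal (hdom x0 hx0) (hbot x0)).symm
  obtain ⟨R, hR⟩ := hcoer M
  set r : ℝ := max R ‖x0‖ with hr
  set K : Set (EuclideanSpace ℝ (Fin n)) := C ∩ Metric.closedBall 0 r with hK
  have hKcomp : IsCompact K := (isCompact_closedBall 0 r).inter_left hCclosed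
  have hx0K : x0 ∈ K :=
    ⟨hx0, by rw [mem_closedBall_zero_iff]; exact le_max_right R ‖x0‖⟩
  obtain ⟨xb, hxbK, hxbmin⟩ := lsc_exists_min_on_compact hKcomp ⟨x0, hx0K⟩ hlsc
  have hxbC : xb ∈ C := hxbK.1
  -- xb is a minimizer on all of C
  have hmin : ∀ y ∈ C, f xb ≤ f y := by
    intro y hy
    by_cases hyb : y ∈ Metric.closedBall 0 r
    · exact hxbmin y ⟨hy, hyb⟩
    · have : r ≤ ‖y‖ := by
        simp only [Metric.mem_closedBall, dist_zero_right, not_le] at hyb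
        exact hyb.le
      have h1 : (M : EReal) < f y := hR y (le_trans (le_max_left _ _) this)
      calc f xb ≤ f x0 := hxbmin x0 hx0K
        _ = (M : EReal) := hfx0
        _ ≤ f y := h1.le
  -- key inequality
  have hkey : ∀ y ∈ C, f xb + (((1 : ℝ) / 4 : ℝ) : EReal) * φ ‖y - xb‖ ≤ f y := by
    intro y hy
    have hmem : ((1 : ℝ) / 2) ∈ Set.Icc (0 : ℝ) 1 := by constructor <;> norm_num
    have hq := hquasi hy hxbC hmem
    have hmidC : ((1 : ℝ) / 2) • y + (1 - (1 : ℝ) / 2) • xb ∈ C :=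
      hCconv hy hxbC (by norm_num) (by norm_num) (by norm_num)
    have hcoeff : (((1 : ℝ) / 2 * (1 - (1 : ℝ) / 2) : ℝ) : EReal)
        = (((1 : ℝ) / 4 : ℝ) : EReal) := by norm_num
    calc f xb + (((1 : ℝ) / 4 : ℝ) : EReal) * φ ‖y - xb‖
        ≤ f (((1 : ℝ) / 2) • y + (1 - (1 : ℝ) / 2) • xb)
            + (((1 : ℝ) / 4 : ℝ) : EReal) * φ ‖y - xb‖ :=
          add_le_add_left (hmin _ hmidC) _
        _ ≤ max (f y) (f xb) := by rw [← hcoeff]; exact hq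
        _ = f y := max_eq_left (hmin y hy)
  refine ⟨xb, hxbC, hmin, ?_, hkey⟩
  -- uniqueness
  intro z hz hzmin
  by_contra hne
  have hpos : (0 : ℝ) < ‖z - xb‖ := by
    rw [norm_pos_iff]; exact sub_ne_zero_of_ne hne
  have hφpos : (0 : EReal) < φ ‖z - xb‖ := hφ.2.2 _ hpos
  have hppos : (0 : EReal) < (((1 : ℝ) / 4 : ℝ) : EReal) * φ ‖z - xb‖ :=
    EReal.mul_pos (by exact_mod_cast by norm_num) hφpos
  have hle : f xb + (((1 : ℝ) / 4 : ℝ) : EReal) * φ ‖z - xb‖ ≤ f xb :=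
    le_trans (hkey z hz) (hzmin xb hxbC)
  set a : ℝ := (f xb).toReal with ha
  have hfa : f xb = (a : EReal) := (EReal.coe_toReal (hdom xb hxbC) (hbot xb)).symm
  have : (a : EReal) < (a : EReal) + (((1 : ℝ) / 4 : ℝ) : EReal) * φ ‖z - xb‖ := by
    have := EReal.add_lt_add_left_coe hppos a
    simpa using this
  rw [hfa] at hle
  exact absurd (lt_of_lt_of_le this hle) (lt_irrefl _)
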